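/- If in addition ϕ'(θ) ≤ 0 for all θ ∈ (a,b), or ϕ'(θ) ≥ 0 for all θ ∈ (a,b), then |v(θ,θ̃)| ≤ max(√(1/ϕ(θ)), √(1/ϕ(θ̃))) for all θ, θ̃ ∈ (a,b). -/

import Mathlib

private lemma key_energy (a b : ℝ)
    (ϕ ϕd uI uId uIdd uII uIId uIIdd : ℝ → ℝ)
    (hϕd : ∀ θ ∈ Set.Ioo a b, HasDerivAt ϕ (ϕd θ) θ)
    (hϕpos : ∀ θ ∈ Set.Ioo a b, 0 < ϕ θ)
    (huId : ∀ θ ∈ Set.Ioo a b, HasDerivAt uI (uId θ) θ)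
    (huIdd : ∀ θ ∈ Set.Ioo a b, HasDerivAt uId (uIdd θ) θ)
    (huIId : ∀ θ ∈ Set.Ioo a b, HasDerivAt uII (uIId θ) θ)
    (huIIdd : ∀ θ ∈ Set.Ioo a b, HasDerivAt uIId (uIIdd θ) θ)
    (hodeI : ∀ θ ∈ Set.Ioo a b, uIdd θ + ϕ θ * uI θ = 0)
    (hodeII : ∀ θ ∈ Set.Ioo a b, uIIdd θ + ϕ θ * uII θ = 0)
    (A B c p : ℝ) (hc : c ∈ Set.Ioo a b) (hp : p ∈ Set.Ioo a b)
    (hw0 : A * uI c + B * uII c = 0)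
    (hw1 : (A * uId c + B * uIId c)^2 = 1)
    (hcase : ((∀ θ ∈ Set.Ioo a b, ϕd θ ≤ 0) ∧ p ≤ c) ∨
             ((∀ θ ∈ Set.Ioo a b, 0 ≤ ϕd θ) ∧ c ≤ p)) :
    (A * uI p + B * uII p)^2 ≤ 1 / ϕ c := by
  set w : ℝ → ℝ := fun s => A * uI s + B * uII s with hw
  set wd : ℝ → ℝ := fun s => A * uId s + B * uIId s with hwdef
  set E : ℝ → ℝ := fun s => (w s)^2 + (wd s)^2 / ϕ s with hE
  have hwD : ∀ s ∈ Set.Ioo a b, HasDerivAt w (wd s) s := fun s hs =>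
    ((huId s hs).const_mul A).add ((huIId s hs).const_mul B)
  have hwdD : ∀ s ∈ Set.Ioo a b, HasDerivAt wd (-ϕ s * w s) s := by
    intro s hs
    have h := ((huIdd s hs).const_mul A).add ((huIIdd s hs).const_mul B)
    have h1 := hodeI s hs
    have h2 := hodeII s hs
    have : -ϕ s * w s = A * uIdd s + B * uIIdd s := by
      simp only [hw]; linear_combination (-A) * h1 + (-B) * h2
    rw [this]; exact h
  have hED : ∀ s ∈ Set.Ioo a b, HasDerivAt E (-(ϕd s) * (wd s)^2 / (ϕ s)^2) s := by
    intro s hs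
    have hϕne := (hϕpos s hs).ne'
    have h1 : HasDerivAt (fun t => (w t)^2) (2 * w s * wd s) s := by
      have := (hwD s hs).fun_pow 2
      simpa [mul_comm, mul_assoc, mul_left_comm] using this
    have h2 : HasDerivAt (fun t => (wd t)^2) (2 * wd s * (-ϕ s * w s)) s := by
      have := (hwdD s hs).fun_pow 2
      simpa [mul_comm, mul_assoc, mul_left_comm] using this
    have h3 : HasDerivAt (fun t => (wd t)^2 / ϕ t)
        ((2 * wd s * (-ϕ s * w s) * ϕ s - (wd s)^2 * ϕd s) / (ϕ s)^2) s :=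
      h2.div (hϕd s hs) hϕne
    have h4 := h1.add h3
    have heq : 2 * w s * wd s +
        (2 * wd s * (-ϕ s * w s) * ϕ s - (wd s)^2 * ϕd s) / (ϕ s)^2
        = -(ϕd s) * (wd s)^2 / (ϕ s)^2 := by
      field_simp
      ring
    rw [← heq]; exact h4
  have hEc : E c = 1 / ϕ c := by
    simp only [hE]
    have : w c = 0 := hw0
    rw [this]
    have : (wd c)^2 = 1 := hw1
    rw [this]; ring
  have hwpE : (w p)^2 ≤ E p := by
    have h1 : 0 ≤ (wd p)^2 / ϕ p := div_nonneg (sq_nonneg _) (hϕpos p hp).le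
    simp only [hE]; linarith
  have hcont : ContinuousOn E (Set.Ioo a b) := fun s hs =>
    (hED s hs).continuousAt.continuousWithinAt
  rcases hcase with ⟨hsg, hpc⟩ | ⟨hsg, hcp⟩
  · have hmono : MonotoneOn E (Set.Ioo a b) := by
      apply monotoneOn_of_deriv_nonneg (convex_Ioo a b) hcont
      · intro x hx
        rw [interior_Ioo] at hx
        exact (hED x hx).differentiableAt.differentiableWithinAt
      intro x hx
      rw [interior_Ioo] at hx
      rw [(hED x hx).deriv]
      exact div_nonneg (mul_nonneg (neg_nonneg.2 (hsg x hx)) (sq_nonneg _)) (sq_nonneg _)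
    have := hmono hp hc hpc
    calc (w p)^2 ≤ E p := hwpE
      _ ≤ E c := this
      _ = 1 / ϕ c := hEc
  · have hmono : AntitoneOn E (Set.Ioo a b) := by
      apply antitoneOn_of_deriv_nonpos (convex_Ioo a b) hcont
      · intro x hx
        rw [interior_Ioo] at hx
        exact (hED x hx).differentiableAt.differentiableWithinAt
      intro x hx
      rw [interior_Ioo] at hx
      rw [(hED x hx).deriv]
      have h1 := hsg x hx
      have h2 : (0:ℝ) < (ϕ x)^2 := pow_pos (hϕpos x hx) 2
      have h3 := sq_nonneg (wd x)
      have : -(ϕd x) * (wd x)^2 ≤ 0 := by nlinarith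
      exact div_nonpos_of_nonpos_of_nonneg this h2.le
    have := hmono hc hp hcp
    calc (w p)^2 ≤ E p := hwpE
      _ ≤ E c := this
      _ = 1 / ϕ c := hEc

/-- Theorem 3.1 (second part): if ϕ' has a constant sign on all of (a,b), then
    |v(θ,θ̃)| ≤ max(√(1/ϕ(θ)), √(1/ϕ(θ̃))). -/
theorem stmt_1 (a b : ℝ) (hab : a < b)
    (ϕ ϕd uI uId uIdd uII uIId uIIdd : ℝ → ℝ)
    (hϕd : ∀ θ ∈ Set.Ioo a b, HasDerivAt ϕ (ϕd θ) θ)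
    (hϕdc : ContinuousOn ϕd (Set.Ioo a b))
    (hϕpos : ∀ θ ∈ Set.Ioo a b, 0 < ϕ θ)
    (huId : ∀ θ ∈ Set.Ioo a b, HasDerivAt uI (uId θ) θ)
    (huIdd : ∀ θ ∈ Set.Ioo a b, HasDerivAt uId (uIdd θ) θ)
    (huIId : ∀ θ ∈ Set.Ioo a b, HasDerivAt uII (uIId θ) θ)
    (huIIdd : ∀ θ ∈ Set.Ioo a b, HasDerivAt uIId (uIIdd θ) θ)
    (hodeI : ∀ θ ∈ Set.Ioo a b, uIdd θ + ϕ θ * uI θ = 0)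
    (hodeII : ∀ θ ∈ Set.Ioo a b, uIIdd θ + ϕ θ * uII θ = 0)
    (hW : ∀ θ ∈ Set.Ioo a b, uI θ * uIId θ - uId θ * uII θ = 1)
    (hsign : (∀ θ ∈ Set.Ioo a b, ϕd θ ≤ 0) ∨ (∀ θ ∈ Set.Ioo a b, 0 ≤ ϕd θ)) :
    ∀ θ ∈ Set.Ioo a b, ∀ θt ∈ Set.Ioo a b,
      |uI θ * uII θt - uI θt * uII θ| ≤
        max (Real.sqrt (1 / ϕ θ)) (Real.sqrt (1 / ϕ θt)) := by
  intro θ hθ θt hθt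
  -- two possible "centers": form1 centered at θt, form2 centered at θ
  have form1 : ∀ (hh : ((∀ s ∈ Set.Ioo a b, ϕd s ≤ 0) ∧ θ ≤ θt) ∨
      ((∀ s ∈ Set.Ioo a b, 0 ≤ ϕd s) ∧ θt ≤ θ)),
      (uI θ * uII θt - uI θt * uII θ)^2 ≤ 1 / ϕ θt := by
    intro hh
    have h := key_energy a b ϕ ϕd uI uId uIdd uII uIId uIIdd hϕd hϕpos huId huIdd
      huIId huIIdd hodeI hodeII (uII θt) (-uI θt) θt θ hθt hθ
      (by ring)
      (by have := hW θt hθt; nlinarith)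
      (by rcases hh with ⟨h1, h2⟩ | ⟨h1, h2⟩
          · exact Or.inl ⟨h1, h2⟩
          · exact Or.inr ⟨h1, h2⟩)
    calc (uI θ * uII θt - uI θt * uII θ)^2
        = (uII θt * uI θ + (-uI θt) * uII θ)^2 := by ring
      _ ≤ 1 / ϕ θt := h
  have form2 : ∀ (hh : ((∀ s ∈ Set.Ioo a b, ϕd s ≤ 0) ∧ θt ≤ θ) ∨
      ((∀ s ∈ Set.Ioo a b, 0 ≤ ϕd s) ∧ θ ≤ θt)),
      (uI θ * uII θt - uI θt * uII θ)^2 ≤ 1 / ϕ θ := by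
    intro hh
    have h := key_energy a b ϕ ϕd uI uId uIdd uII uIId uIIdd hϕd hϕpos huId huIdd
      huIId huIIdd hodeI hodeII (-uII θ) (uI θ) θ θt hθ hθt
      (by ring)
      (by have := hW θ hθ; nlinarith)
      (by rcases hh with ⟨h1, h2⟩ | ⟨h1, h2⟩
          · exact Or.inl ⟨h1, h2⟩
          · exact Or.inr ⟨h1, h2⟩)
    calc (uI θ * uII θt - uI θt * uII θ)^2
        = ((-uII θ) * uI θt + uI θ * uII θt)^2 := by ring
      _ ≤ 1 / ϕ θ := h
  rcases hsign with hs | hs <;> rcases le_total θ θt with hle | hle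
  · exact le_trans (Real.abs_le_sqrt (form1 (Or.inl ⟨hs, hle⟩))) (le_max_right _ _)
  · exact le_trans (Real.abs_le_sqrt (form2 (Or.inl ⟨hs, hle⟩))) (le_max_left _ _)
  · exact le_trans (Real.abs_le_sqrt (form2 (Or.inr ⟨hs, hle⟩))) (le_max_left _ _)
  · exact le_trans (Real.abs_le_sqrt (form1 (Or.inr ⟨hs, hle⟩))) (le_max_right _ _)
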